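/- Let X_1,...,X_n be a uniformly random ordering of reals x_1,...,x_n with zero sum and B = sum x_i^2, let a_1,...,a_n be fixed reals, W_k = sum_{i=1}^k a_i X_i, S_k = X_1+...+X_k, alpha_1(k) = a_1+...+a_k, alpha_2(k) = a_1^2+...+a_k^2, and M_k = W_k + (alpha_1(k)/(n-k)) S_k. Then for 1 <= k <= n-1, E[M_k^2] = (alpha_2(k) B)/(n-1) + (alpha_1(k)^2 B)/((n-1)(n-k)). -/

import Mathlib

open MeasureTheory Finset

noncomputable section

instance permMS (n : ℕ) : MeasurableSpace (Equiv.Perm (Fin n)) := ⊤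

instance permNE (n : ℕ) : Nonempty (Equiv.Perm (Fin n)) := ⟨1⟩

/-- uniform probability measure on the n! orderings: sampling without replacement. -/
def permMeasure (n : ℕ) : Measure (Equiv.Perm (Fin n)) :=
  (PMF.uniformOfFintype (Equiv.Perm (Fin n))).toMeasure

/-- `X n x i σ` : the `(i+1)`-st sample (0-based `i`) drawn without replacement. -/
def X (n : ℕ) (x : Fin n → ℝ) (i : ℕ) (σ : Equiv.Perm (Fin n)) : ℝ :=
  if h : i < n then x (σ ⟨i, h⟩) else 0

/-- partial sum `S_k = X_1 + ⋯ + X_k`. -/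
def S (n : ℕ) (x : Fin n → ℝ) (k : ℕ) (σ : Equiv.Perm (Fin n)) : ℝ :=
  ∑ i ∈ Finset.range k, X n x i σ

/-- partial sum of squares `T_k = X_1^2 + ⋯ + X_k^2`. -/
def T (n : ℕ) (x : Fin n → ℝ) (k : ℕ) (σ : Equiv.Perm (Fin n)) : ℝ :=
  ∑ i ∈ Finset.range k, (X n x i σ) ^ 2

/-- `F_k = σ(X_1, ..., X_k)`. -/
def F (n : ℕ) (x : Fin n → ℝ) (k : ℕ) : MeasurableSpace (Equiv.Perm (Fin n)) :=
  MeasurableSpace.comap (fun σ => fun i : Fin k => X n x i σ) inferInstance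

instance permMSC (n : ℕ) : MeasurableSingletonClass (Equiv.Perm (Fin n)) := ⟨fun _ => trivial⟩

instance (n : ℕ) : IsProbabilityMeasure (permMeasure n) := PMF.toMeasure.isProbabilityMeasure _

lemma integral_perm (n : ℕ) (f : Equiv.Perm (Fin n) → ℝ) :
    ∫ σ, f σ ∂(permMeasure n) = (n.factorial : ℝ)⁻¹ * ∑ σ, f σ := by
  rw [integral_fintype (hf := .of_finite)]
  simp only [Measure.real, permMeasure, PMF.toMeasure_apply_singleton _ _ (MeasurableSet.singleton _),
    PMF.uniformOfFintype_apply, smul_eq_mul]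
  rw [Finset.mul_sum]
  congr 1; ext σ
  rw [ENNReal.toReal_inv]
  simp [Fintype.card_perm]

lemma sum_perm_comp_single {n : ℕ} (g : Fin n → ℝ) (i i' : Fin n) :
    ∑ σ : Equiv.Perm (Fin n), g (σ i') = ∑ σ : Equiv.Perm (Fin n), g (σ i) := by
  rw [← Equiv.sum_comp (Equiv.mulRight (Equiv.swap i i')) (fun σ => g (σ i'))]
  apply Fintype.sum_congr
  intro σ
  simp [Equiv.Perm.mul_apply, Equiv.swap_apply_right]

lemma sum_perm_single {n : ℕ} (g : Fin n → ℝ) (i : Fin n) :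
    (n : ℝ) * ∑ σ : Equiv.Perm (Fin n), g (σ i) = (n.factorial : ℝ) * ∑ t, g t := by
  have h : ∑ i' : Fin n, ∑ σ : Equiv.Perm (Fin n), g (σ i')
      = (n : ℝ) * ∑ σ : Equiv.Perm (Fin n), g (σ i) := by
    rw [Fintype.sum_congr _ _ (fun i' => sum_perm_comp_single g i i')]
    simp [Finset.card_univ, mul_comm]
  rw [← h, Finset.sum_comm]
  rw [Fintype.sum_congr (fun σ => ∑ i' : Fin n, g (σ i')) (fun _ => ∑ t, g t)
    (fun σ => Equiv.sum_comp σ g)]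
  simp [Fintype.card_perm, mul_comm]

lemma sum_perm_comp_pair {n : ℕ} (x : Fin n → ℝ) (i j i' j' : Fin n)
    (hij : i ≠ j) (hij' : i' ≠ j') :
    ∑ σ : Equiv.Perm (Fin n), x (σ i') * x (σ j')
      = ∑ σ : Equiv.Perm (Fin n), x (σ i) * x (σ j) := by
  set τ : Equiv.Perm (Fin n) := (Equiv.swap (Equiv.swap i' i j') j) * (Equiv.swap i' i) with hτ
  have hji : i ≠ Equiv.swap i' i j' := by
    intro h
    have h2 : (Equiv.swap i' i) i' = (Equiv.swap i' i) j' := by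
      rw [Equiv.swap_apply_left]; exact h
    exact hij' ((Equiv.injective _) h2)
  have hτi : τ i' = i := by
    simp only [hτ, Equiv.Perm.mul_apply, Equiv.swap_apply_left]
    exact Equiv.swap_apply_of_ne_of_ne hji hij
  have hτj : τ j' = j := by
    simp only [hτ, Equiv.Perm.mul_apply, Equiv.swap_apply_left]
  rw [← Equiv.sum_comp (Equiv.mulRight τ) (fun σ => x (σ i') * x (σ j'))]
  apply Fintype.sum_congr
  intro σ
  simp [Equiv.Perm.mul_apply, hτi, hτj]

lemma sum_perm_pair {n : ℕ} (x : Fin n → ℝ) (B : ℝ)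
    (hx : ∑ i, x i = 0) (hB : ∑ i, (x i) ^ 2 = B)
    (i j : Fin n) (hij : i ≠ j) :
    (n : ℝ) * ((n : ℝ) - 1) * ∑ σ : Equiv.Perm (Fin n), x (σ i) * x (σ j)
      = -(n.factorial : ℝ) * B := by
  have hn1 : 1 ≤ n := i.pos
  have key1 : ∑ i' : Fin n, ∑ j' ∈ univ.erase i',
      (∑ σ : Equiv.Perm (Fin n), x (σ i') * x (σ j'))
      = (n : ℝ) * ((n : ℝ) - 1) * ∑ σ : Equiv.Perm (Fin n), x (σ i) * x (σ j) := by
    have h1 : ∀ i' : Fin n, ∑ j' ∈ univ.erase i',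
        (∑ σ : Equiv.Perm (Fin n), x (σ i') * x (σ j'))
        = ((n : ℝ) - 1) * ∑ σ : Equiv.Perm (Fin n), x (σ i) * x (σ j) := by
      intro i'
      rw [Finset.sum_congr rfl
        (fun j' hj' => sum_perm_comp_pair x i j i' j' hij (Finset.ne_of_mem_erase hj').symm)]
      rw [Finset.sum_const, Finset.card_erase_of_mem (mem_univ _), Finset.card_univ,
        Fintype.card_fin, nsmul_eq_mul]
      congr 1
      push_cast [Nat.cast_sub hn1]
      ring
    rw [Fintype.sum_congr _ _ h1, Finset.sum_const, Finset.card_univ, Fintype.card_fin,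
      nsmul_eq_mul]
    ring
  have key2 : ∑ i' : Fin n, ∑ j' ∈ univ.erase i',
      (∑ σ : Equiv.Perm (Fin n), x (σ i') * x (σ j'))
      = -(n.factorial : ℝ) * B := by
    have h1 : ∀ i' : Fin n, ∑ j' ∈ univ.erase i',
        (∑ σ : Equiv.Perm (Fin n), x (σ i') * x (σ j'))
        = ∑ σ : Equiv.Perm (Fin n), ∑ j' ∈ univ.erase i', x (σ i') * x (σ j') := by
      intro i'; exact Finset.sum_comm
    rw [Fintype.sum_congr _ _ h1, Finset.sum_comm]
    have h2 : ∀ σ : Equiv.Perm (Fin n),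
        ∑ i' : Fin n, ∑ j' ∈ univ.erase i', x (σ i') * x (σ j') = -B := by
      intro σ
      have h3 : ∀ i' : Fin n, ∑ j' ∈ univ.erase i', x (σ i') * x (σ j')
          = -(x (σ i') ^ 2) := by
        intro i'
        rw [← Finset.mul_sum, Finset.sum_erase_eq_sub (mem_univ _)]
        rw [Equiv.sum_comp σ x, hx]
        ring
      rw [Fintype.sum_congr _ _ h3, Finset.sum_neg_distrib, ← hB,
        ← Equiv.sum_comp σ (fun t => x t ^ 2)]
    rw [Fintype.sum_congr _ _ h2, Finset.sum_const, Finset.card_univ, Fintype.card_perm,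
      Fintype.card_fin, nsmul_eq_mul]
    ring
  rw [← key1, key2]

lemma card_filter_lt (n k : ℕ) (hk : k ≤ n) :
    (univ.filter fun i : Fin n => (i : ℕ) < k).card = k := by
  rw [← Finset.card_range k]
  apply Finset.card_bij (fun (i : Fin n) _ => (i : ℕ))
  · intro i hi; simpa using (Finset.mem_filter.1 hi).2
  · intro i _ j _ h; exact Fin.val_injective h
  · intro b hb
    refine ⟨⟨b, lt_of_lt_of_le (Finset.mem_range.1 hb) hk⟩, ?_, rfl⟩
    simp [Finset.mem_range.1 hb]

lemma S_eq (n k : ℕ) (hk : k ≤ n) (x : Fin n → ℝ) (σ : Equiv.Perm (Fin n)) :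
    S n x k σ = ∑ i ∈ univ.filter (fun i : Fin n => (i : ℕ) < k), x (σ i) := by
  rw [S]
  apply Finset.sum_bij
    (fun (i : ℕ) (hi : i ∈ Finset.range k) =>
      (⟨i, lt_of_lt_of_le (Finset.mem_range.1 hi) hk⟩ : Fin n))
  · intro i hi; simp [Finset.mem_range.1 hi]
  · intro i hi j hj h; simpa using congrArg Fin.val h
  · intro b hb
    refine ⟨(b : ℕ), Finset.mem_range.2 (by simpa using (Finset.mem_filter.1 hb).2), ?_⟩
    simp
  · intro i hi
    rw [X, dif_pos (lt_of_lt_of_le (Finset.mem_range.1 hi) hk)]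
theorem statement16 (n : ℕ) (x : Fin n → ℝ) (B : ℝ)
    (hx : ∑ i, x i = 0) (hB : ∑ i, (x i) ^ 2 = B)
    (a : Fin n → ℝ) (k : ℕ) (hk1 : 1 ≤ k) (hk2 : k ≤ n - 1) :
    ∫ σ, ((∑ i ∈ Finset.univ.filter fun i : Fin n => (i : ℕ) < k, a i * x (σ i))
        + ((∑ i ∈ Finset.univ.filter fun i : Fin n => (i : ℕ) < k, a i) / ((n : ℝ) - k))
          * S n x k σ) ^ 2 ∂(permMeasure n)
      = (∑ i ∈ Finset.univ.filter fun i : Fin n => (i : ℕ) < k, (a i) ^ 2) * B / ((n : ℝ) - 1)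
        + (∑ i ∈ Finset.univ.filter fun i : Fin n => (i : ℕ) < k, a i) ^ 2 * B
            / (((n : ℝ) - 1) * ((n : ℝ) - k)) := by
  have hn2 : 2 ≤ n := by omega
  have hkn : k < n := by omega
  set t := Finset.univ.filter fun i : Fin n => (i : ℕ) < k with ht
  set α1 := ∑ i ∈ t, a i with hα1
  set α2 := ∑ i ∈ t, (a i) ^ 2 with hα2
  set c := α1 / ((n : ℝ) - k) with hc
  have hnR : (n : ℝ) ≠ 0 := by
    have : (0:ℝ) < n := by exact_mod_cast Nat.lt_of_lt_of_le (by norm_num) hn2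
    linarith
  have hn1R : (n : ℝ) - 1 ≠ 0 := by
    have : (2:ℝ) ≤ n := by exact_mod_cast hn2
    linarith
  have hnkR : (n : ℝ) - k ≠ 0 := by
    have : (k:ℝ) < n := by exact_mod_cast hkn
    linarith
  have hfac : (n.factorial : ℝ) ≠ 0 := Nat.cast_ne_zero.2 n.factorial_ne_zero
  set b : Fin n → ℝ := fun i => a i + c with hb
  have hint : ∀ σ : Equiv.Perm (Fin n),
      ((∑ i ∈ t, a i * x (σ i)) + c * S n x k σ)
        = ∑ i ∈ t, b i * x (σ i) := by
    intro σ
    rw [S_eq n k hkn.le x σ, ← ht, Finset.mul_sum, ← Finset.sum_add_distrib]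
    exact Finset.sum_congr rfl (fun i _ => by rw [hb]; ring)
  simp only [hint]
  rw [integral_perm]
  set D := (n.factorial : ℝ) * B / n with hD
  set E := -((n.factorial : ℝ) * B) / ((n : ℝ) * ((n : ℝ) - 1)) with hE
  have hdiag : ∀ i : Fin n, ∑ σ : Equiv.Perm (Fin n), x (σ i) * x (σ i) = D := by
    intro i
    have h1 := sum_perm_single (fun s => x s * x s) i
    have h2 : ∑ s, x s * x s = B := by
      rw [← hB]; exact Fintype.sum_congr _ _ (fun s => (sq (x s)).symm)
    rw [h2] at h1
    rw [hD, eq_div_iff hnR]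
    linarith
  have hoff : ∀ i j : Fin n, i ≠ j →
      ∑ σ : Equiv.Perm (Fin n), x (σ i) * x (σ j) = E := by
    intro i j hij
    have h1 := sum_perm_pair x B hx hB i j hij
    rw [hE, eq_div_iff (mul_ne_zero hnR hn1R)]
    linarith
  have hsum : ∑ σ : Equiv.Perm (Fin n), (∑ i ∈ t, b i * x (σ i)) ^ 2
      = (∑ i ∈ t, b i) ^ 2 * E + (∑ i ∈ t, (b i) ^ 2) * (D - E) := by
    have step1 : ∀ σ : Equiv.Perm (Fin n), (∑ i ∈ t, b i * x (σ i)) ^ 2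
        = ∑ i ∈ t, ∑ j ∈ t, (b i * b j) * (x (σ i) * x (σ j)) := by
      intro σ
      rw [sq, Finset.sum_mul_sum]
      exact Finset.sum_congr rfl fun i _ => Finset.sum_congr rfl fun j _ => by ring
    rw [Fintype.sum_congr _ _ step1, Finset.sum_comm]
    have step2 : ∀ i ∈ t, ∑ σ : Equiv.Perm (Fin n), ∑ j ∈ t, (b i * b j) * (x (σ i) * x (σ j))
        = (∑ j ∈ t, b i * b j) * E + (b i) ^ 2 * (D - E) := by
      intro i hi
      rw [Finset.sum_comm]
      have step3 : ∀ j ∈ t, ∑ σ : Equiv.Perm (Fin n), (b i * b j) * (x (σ i) * x (σ j))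
          = (b i * b j) * (∑ σ : Equiv.Perm (Fin n), x (σ i) * x (σ j)) := by
        intro j _; rw [Finset.mul_sum]
      rw [Finset.sum_congr rfl step3]
      rw [← Finset.sum_erase_add t _ hi, ← Finset.sum_erase_add t (fun j => b i * b j) hi]
      have step4 : ∀ j ∈ t.erase i,
          (b i * b j) * (∑ σ : Equiv.Perm (Fin n), x (σ i) * x (σ j)) = (b i * b j) * E := by
        intro j hj
        rw [hoff i j (Finset.ne_of_mem_erase hj).symm]
      rw [Finset.sum_congr rfl step4, hdiag i, ← Finset.sum_mul]
      ring
    rw [Finset.sum_congr rfl step2, Finset.sum_add_distrib, ← Finset.sum_mul, ← Finset.sum_mul]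
    congr 1
    rw [← Finset.sum_mul_sum, sq]
  rw [hsum]
  have hb1 : ∑ i ∈ t, b i = α1 + k * c := by
    rw [hb, Finset.sum_add_distrib, Finset.sum_const, card_filter_lt n k hkn.le, nsmul_eq_mul,
      ← hα1]
  have hb2 : ∑ i ∈ t, (b i) ^ 2 = α2 + 2 * c * α1 + k * c ^ 2 := by
    have h : ∀ i ∈ t, (b i) ^ 2 = (a i) ^ 2 + 2 * c * a i + c ^ 2 := fun i _ => by
      rw [hb]; ring
    rw [Finset.sum_congr rfl h, Finset.sum_add_distrib, Finset.sum_add_distrib,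
      Finset.sum_const, ← Finset.mul_sum, card_filter_lt n k hkn.le, nsmul_eq_mul, ← hα1, ← hα2]
  rw [hb1, hb2, hD, hE, hc]
  field_simp
  ring

end
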